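/- If S ⊆ (Fin q ⊕ {*})^n is an A(n,q,w,t) design, then the set U of all words in (Fin (q·q') ⊕ {*})^n obtained by taking each codeword a ∈ S of weight t and each tuple b ∈ (Fin q')^t, placing the pair (a_i, b_j) in the non-star positions of a (in order) and * in the star positions, is an A(n,q·q',w,t) design. -/
import Mathlib


/-- Weight of a word over `Option α`: number of non-star (non-`none`) positions. -/
def wt {n : ℕ} {α : Type*} (u : Fin n → Option α) : ℕ :=
  (Finset.univ.filter fun i => ((u i).isSome : Prop)).card

/-- `SubFace v u` : the face of `v` is contained in the face of `u`, i.e. `v` agrees with `u`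
on all non-star positions of `u`. -/
def SubFace {n : ℕ} {α : Type*} (v u : Fin n → Option α) : Prop :=
  ∀ i, ((u i).isSome : Prop) → v i = u i

/-- `H(n,q,w,t)` design over alphabet `α` (with `q = #α`): a set of weight-`w` words such that
every weight-`t` word contains exactly one of them. -/
def IsH (n w t : ℕ) (α : Type*) (S : Set (Fin n → Option α)) : Prop :=
  (∀ s ∈ S, wt s = w) ∧
  ∀ u : Fin n → Option α, wt u = t → ∃! s, s ∈ S ∧ SubFace s u

/-- `A(n,q,w,t)` design over alphabet `α`: a set of weight-`t` words such that every
weight-`w` word is contained in exactly one of them. -/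
def IsA (n w t : ℕ) (α : Type*) (S : Set (Fin n → Option α)) : Prop :=
  (∀ s ∈ S, wt s = t) ∧
  ∀ v : Fin n → Option α, wt v = w → ∃! s, s ∈ S ∧ SubFace v s

/-- Pairing construction: given a word `a` of weight `m` over `Option (Fin q)` and a tuple
`b : Fin m → Fin q'`, place the pair `(a i, b j)` (encoded in `Fin (q*q')`) at the `i`-th
non-star position of `a`, where `j` is the rank of `i` among the non-star positions of `a`. -/
noncomputable def pairWord {n q q' m : ℕ} (a : Fin n → Option (Fin q))
    (b : Fin m → Fin q') (h : wt a = m) : Fin n → Option (Fin (q * q')) :=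
  fun i =>
    if hi : ((a i).isSome : Prop) then
      some (finProdFinEquiv ((a i).get hi,
        b (((Finset.univ.filter fun j => ((a j).isSome : Prop)).orderIsoOfFin h).symm
          ⟨i, Finset.mem_filter.mpr ⟨Finset.mem_univ i, hi⟩⟩)))
    else none

namespace ConstructionII

variable {n q q' m : ℕ}

lemma pairWord_isSome (a : Fin n → Option (Fin q)) (b : Fin m → Fin q') (h : wt a = m)
    (i : Fin n) : ((pairWord a b h i).isSome : Prop) ↔ ((a i).isSome : Prop) := by
  unfold pairWord
  split <;> simp_all

lemma pairWord_apply (a : Fin n → Option (Fin q)) (b : Fin m → Fin q') (h : wt a = m)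
    (i : Fin n) (hi : ((a i).isSome : Prop)) :
    pairWord a b h i = some (finProdFinEquiv ((a i).get hi,
      b (((Finset.univ.filter fun j => ((a j).isSome : Prop)).orderIsoOfFin h).symm
          ⟨i, Finset.mem_filter.mpr ⟨Finset.mem_univ i, hi⟩⟩))) := by
  unfold pairWord
  rw [dif_pos hi]

lemma wt_pairWord (a : Fin n → Option (Fin q)) (b : Fin m → Fin q') (h : wt a = m) :
    wt (pairWord a b h) = wt a := by
  unfold wt
  congr 1
  apply Finset.filter_congr
  intro i _
  simp [pairWord_isSome]

/-- Projection to the first coordinate. -/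
def proj (v : Fin n → Option (Fin (q * q'))) : Fin n → Option (Fin q) :=
  fun i => (v i).map fun x => (finProdFinEquiv.symm x).1

lemma proj_isSome (v : Fin n → Option (Fin (q * q'))) (i : Fin n) :
    ((proj v i).isSome : Prop) ↔ ((v i).isSome : Prop) := by
  simp [proj]

lemma wt_proj (v : Fin n → Option (Fin (q * q'))) : wt (proj v) = wt v := by
  unfold wt
  congr 1
  apply Finset.filter_congr
  intro i _
  simp [proj]

lemma subface_proj {v : Fin n → Option (Fin (q * q'))} {a : Fin n → Option (Fin q)}
    {b : Fin m → Fin q'} {h : wt a = m}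
    (hsf : SubFace v (pairWord a b h)) : SubFace (proj v) a := by
  intro i hi
  have hv := hsf i ((pairWord_isSome a b h i).mpr hi)
  have h1 : (v i).map (fun x => (finProdFinEquiv.symm x).1) = proj v i := rfl
  rw [pairWord_apply a b h i hi] at hv
  rw [proj] at h1 ⊢
  rw [hv, Option.map_some, Equiv.symm_apply_apply, Option.some_get]

end ConstructionII

open ConstructionII in
theorem construction_II (n q q' w t : ℕ) (hwn : w ≤ n) (htw : t ≤ w) (ht : 1 ≤ t)
    (hq : 1 ≤ q) (hq' : 1 ≤ q')
    (S : Set (Fin n → Option (Fin q))) (hS : IsA n w t (Fin q) S) :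
    IsA n w t (Fin (q * q'))
      {c | ∃ a ∈ S, ∃ b : Fin t → Fin q', ∃ h : wt a = t, c = pairWord a b h} := by
  obtain ⟨hSwt, hScov⟩ := hS
  constructor
  · rintro c ⟨a, ha, b, h, rfl⟩
    rw [wt_pairWord, h]
  · intro v hv
    obtain ⟨a, ⟨haS, hsub⟩, huniq⟩ := hScov (proj v) (by rw [wt_proj, hv])
    have h : wt a = t := hSwt a haS
    -- positions where `a` is non-star have `v` non-star
    have hvs : ∀ i : Fin n, ((a i).isSome : Prop) → ((v i).isSome : Prop) := by
      intro i hi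
      have h1 := hsub i hi
      have h2 : ((proj v i).isSome : Prop) := by rw [h1]; exact hi
      exact (proj_isSome v i).mp h2
    set F := (Finset.univ.filter fun j => ((a j).isSome : Prop)) with hF
    set e := F.orderIsoOfFin h with he
    have hsome : ∀ j : Fin t, ((a (e j : Fin n)).isSome : Prop) := by
      intro j
      exact (Finset.mem_filter.mp (e j).2).2
    -- the second coordinates of `v` along the support of `a`
    set b : Fin t → Fin q' :=
      fun j => (finProdFinEquiv.symm ((v (e j : Fin n)).get (hvs _ (hsome j)))).2 with hb
    have hsf : SubFace v (pairWord a b h) := by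
      intro i hi'
      have hi : ((a i).isSome : Prop) := (pairWord_isSome a b h i).mp hi'
      have hmem : i ∈ F := Finset.mem_filter.mpr ⟨Finset.mem_univ i, hi⟩
      rw [pairWord_apply a b h i hi]
      set j := e.symm ⟨i, hmem⟩ with hj
      have hij : ((e j : F) : Fin n) = i := by rw [hj, OrderIso.apply_symm_apply]
      obtain ⟨x, hx⟩ := Option.isSome_iff_exists.mp (hvs i hi)
      have hxmem : x ∈ v (e j : Fin n) := by rw [hij, hx]; rfl
      have hget : (v (e j : Fin n)).get (hvs _ (hsome j)) = x := Option.get_of_mem _ hxmem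
      have hb1 : (finProdFinEquiv.symm x).1 = (a i).get hi := by
        have h1 : (v i).map (fun x => (finProdFinEquiv.symm x).1) = a i := hsub i hi
        rw [hx, Option.map_some, ← Option.some_get hi] at h1
        exact Option.some_injective _ h1
      have hb2 : b j = (finProdFinEquiv.symm x).2 := by
        simp only [hb]
        rw [hget]
      rw [hx, hb2, ← hb1]
      congr 1
      have : ((finProdFinEquiv.symm x).1, (finProdFinEquiv.symm x).2) = finProdFinEquiv.symm x :=
        rfl
      rw [this, Equiv.apply_symm_apply]
    refine ⟨pairWord a b h, ⟨⟨a, haS, b, h, rfl⟩, hsf⟩, ?_⟩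
    rintro c' ⟨⟨a', ha'S, b', h', rfl⟩, hsf'⟩
    have haa : a' = a := huniq a' ⟨ha'S, subface_proj hsf'⟩
    subst haa
    funext i
    by_cases hi : ((a' i).isSome : Prop)
    · rw [← hsf' i ((pairWord_isSome a' b' h' i).mpr hi),
        ← hsf i ((pairWord_isSome a' b h i).mpr hi)]
    · have h1 : pairWord a' b' h' i = none := by
        unfold pairWord; rw [dif_neg hi]
      have h2 : pairWord a' b h i = none := by
        unfold pairWord; rw [dif_neg hi]
      rw [h1, h2]
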